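/- Let v, v' : Fin 4 → ℝ⁴ each consist of unit spacelike vectors (⟨v i, v i⟩ = 1 = ⟨v' i, v' i⟩) such that both P(v) = {w ∈ ℍ³ : ⟨w, v i⟩ ≥ 0 for all i} and P(v') are compact with nonempty interior, and suppose ⟨v i, v j⟩ = ⟨v' i, v' j⟩ for all i, j (i.e., the two compact hyperbolic tetrahedra have the same dihedral angle along each corresponding edge). Then there is a linear automorphism ρ of ℝ⁴ preserving the Lorentzian bilinear form with ρ(ℍ³) = ℍ³ and ρ(v i) = v' i for all i; consequently ρ(P(v)) = P(v'), so the marked tetrahedron with given non-obtuse dihedral angles is unique up to hyperbolic isometry. -/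

import Mathlib

open Real

/-- The Lorentzian bilinear form on `ℝ⁴`. -/
noncomputable def lor (x y : Fin 4 → ℝ) : ℝ :=
  -(x 0 * y 0) + x 1 * y 1 + x 2 * y 2 + x 3 * y 3

/-- The hyperboloid model of hyperbolic 3-space. -/
def Hyp : Set (Fin 4 → ℝ) := {x | lor x x = -1 ∧ 0 < x 0}

/-- The intersection of the four half-spaces with normals `v i`, as a subset of `ℍ³`. -/
def polyhedron (v : Fin 4 → (Fin 4 → ℝ)) : Set (Fin 4 → ℝ) :=
  {w ∈ Hyp | ∀ i, 0 ≤ lor w (v i)}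

set_option maxHeartbeats 1000000

lemma lor_comm (x y : Fin 4 → ℝ) : lor x y = lor y x := by simp [lor]; ring

lemma lor_neg_left (x y : Fin 4 → ℝ) : lor (-x) y = -lor x y := by simp [lor]; ring

lemma lor_neg_neg (x : Fin 4 → ℝ) : lor (-x) (-x) = lor x x := by simp only [lor, Pi.neg_apply]; ring

lemma lor_sub_left (x y w : Fin 4 → ℝ) : lor (x - y) w = lor x w - lor y w := by
  simp only [lor, Pi.sub_apply]; ring


lemma perp_timelike_eq_zero {u e : Fin 4 → ℝ} (hu : lor u u < 0)
    (hue : lor u e = 0) (he : lor e e ≤ 0) : e = 0 := by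
  simp only [lor] at hu hue he
  have cs : (u 1 * e 1 + u 2 * e 2 + u 3 * e 3)^2 ≤
      (u 1^2 + u 2^2 + u 3^2) * (e 1^2 + e 2^2 + e 3^2) := by
    nlinarith [sq_nonneg (u 1 * e 2 - u 2 * e 1), sq_nonneg (u 1 * e 3 - u 3 * e 1),
      sq_nonneg (u 2 * e 3 - u 3 * e 2)]
  have h2 : (u 0 * e 0)^2 ≤ (u 1^2 + u 2^2 + u 3^2) * (e 1^2 + e 2^2 + e 3^2) := by
    have : u 0 * e 0 = u 1 * e 1 + u 2 * e 2 + u 3 * e 3 := by linarith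
    rw [this]; exact cs
  have hsp : e 1^2 + e 2^2 + e 3^2 ≤ e 0^2 := by nlinarith
  have husp : u 1^2 + u 2^2 + u 3^2 < u 0^2 := by nlinarith
  have huspn : 0 ≤ u 1^2 + u 2^2 + u 3^2 := by positivity
  have h3 : e 0^2 * (u 0^2 - (u 1^2 + u 2^2 + u 3^2)) ≤ 0 := by nlinarith
  have h4 : 0 ≤ e 0^2 * (u 0^2 - (u 1^2 + u 2^2 + u 3^2)) :=
    mul_nonneg (sq_nonneg _) (by linarith)
  have h5 : e 0^2 = 0 := by
    rcases mul_eq_zero.1 (le_antisymm h3 h4) with h | h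
    · exact h
    · linarith
  have h0 : e 0 = 0 := pow_eq_zero_iff two_ne_zero |>.1 h5
  have h1 : e 1^2 + e 2^2 + e 3^2 ≤ 0 := by nlinarith
  have hh1 : e 1 = 0 := by
    have : e 1^2 = 0 := le_antisymm (by nlinarith [sq_nonneg (e 2), sq_nonneg (e 3)]) (sq_nonneg _)
    exact pow_eq_zero_iff two_ne_zero |>.1 this
  have hh2 : e 2 = 0 := by
    have : e 2^2 = 0 := le_antisymm (by nlinarith [sq_nonneg (e 1), sq_nonneg (e 3)]) (sq_nonneg _)
    exact pow_eq_zero_iff two_ne_zero |>.1 this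
  have hh3 : e 3 = 0 := by
    have : e 3^2 = 0 := le_antisymm (by nlinarith [sq_nonneg (e 1), sq_nonneg (e 2)]) (sq_nonneg _)
    exact pow_eq_zero_iff two_ne_zero |>.1 this
  funext i
  fin_cases i
  · exact h0
  · exact hh1
  · exact hh2
  · exact hh3

lemma lor_le_neg_one {x y : Fin 4 → ℝ} (hx : lor x x = -1) (hy : lor y y = -1)
    (hx0 : 0 < x 0) (hy0 : 0 < y 0) : lor x y ≤ -1 := by
  simp only [lor] at hx hy ⊢
  have cs : (x 1 * y 1 + x 2 * y 2 + x 3 * y 3)^2 ≤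
      (x 1^2 + x 2^2 + x 3^2) * (y 1^2 + y 2^2 + y 3^2) := by
    nlinarith [sq_nonneg (x 1 * y 2 - x 2 * y 1), sq_nonneg (x 1 * y 3 - x 3 * y 1),
      sq_nonneg (x 2 * y 3 - x 3 * y 2)]
  have hx1 : 1 ≤ x 0 := by nlinarith [sq_nonneg (x 1), sq_nonneg (x 2), sq_nonneg (x 3), sq_nonneg (x 0 - 1)]
  have hy1 : 1 ≤ y 0 := by nlinarith [sq_nonneg (y 1), sq_nonneg (y 2), sq_nonneg (y 3), sq_nonneg (y 0 - 1)]
  have key : (x 1^2 + x 2^2 + x 3^2) * (y 1^2 + y 2^2 + y 3^2) ≤ (x 0 * y 0 - 1)^2 := by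
    have hxs : x 1^2 + x 2^2 + x 3^2 = x 0^2 - 1 := by nlinarith
    have hys : y 1^2 + y 2^2 + y 3^2 = y 0^2 - 1 := by nlinarith
    rw [hxs, hys]
    nlinarith [sq_nonneg (x 0 - y 0)]
  have hM : 1 ≤ x 0 * y 0 := by nlinarith
  have h1 : x 1 * y 1 + x 2 * y 2 + x 3 * y 3 ≤ x 0 * y 0 - 1 := by
    nlinarith [cs, key, hM]
  linarith

lemma lor_self_expand (a u : Fin 4 → ℝ) (t : ℝ) :
    lor (a + t • u) (a + t • u) = lor a a + 2 * t * lor a u + t ^ 2 * lor u u := by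
  simp [lor]; ring

lemma lor_add_smul (a u w : Fin 4 → ℝ) (t : ℝ) :
    lor (a + t • u) w = lor a w + t * lor u w := by
  simp [lor]; ring

lemma lor_smul_left (c : ℝ) (x y : Fin 4 → ℝ) : lor (c • x) y = c * lor x y := by
  simp [lor]; ring

lemma lor_smul_right (c : ℝ) (x y : Fin 4 → ℝ) : lor x (c • y) = c * lor x y := by
  simp [lor]; ring

lemma lor_self_coords (x : Fin 4 → ℝ) :
    lor x x = -(x 0)^2 + (x 1)^2 + (x 2)^2 + (x 3)^2 := by simp [lor]; ring

lemma ray_lemma (v : Fin 4 → (Fin 4 → ℝ)) (R : ℝ) (hR : ∀ p ∈ polyhedron v, ‖p‖ ≤ R)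
    (a u : Fin 4 → ℝ) (ha : lor a a = -1) (ha0 : 0 < a 0)
    (hav : ∀ i, 0 < lor a (v i)) (huv : ∀ i, 0 ≤ lor u (v i))
    (tstar : ℝ) (htpos : 0 < tstar)
    (hroot : lor u u * tstar ^ 2 + 2 * lor a u * tstar - 1 = 0)
    (hneg : ∀ t, 0 ≤ t → t < tstar → lor u u * t ^ 2 + 2 * lor a u * t - 1 < 0) : False := by
  set q := lor u u with hq
  clear_value q
  set b := lor a u with hb
  clear_value b
  -- the quadratic
  have hg : ∀ t : ℝ, lor (a + t • u) (a + t • u) = q * t ^ 2 + 2 * b * t - 1 := by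
    intro t; rw [lor_self_expand, ha, hq, hb]; ring
  -- R is nonneg since a itself is in the polyhedron
  have haP : a ∈ polyhedron v := ⟨⟨ha, ha0⟩, fun i => (hav i).le⟩
  have hR0 : 0 ≤ R := le_trans (norm_nonneg a) (hR a haP)
  -- positivity of the 0-coordinate along the ray
  have pos0 : ∀ t, 0 ≤ t → t < tstar → 0 < a 0 + t * u 0 := by
    intro t ht0 htt
    by_contra hle
    push_neg at hle
    have hu0 : u 0 < 0 := by nlinarith
    set s := a 0 / (-(u 0)) with hs
    have hs0 : 0 < s := div_pos ha0 (by linarith)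
    have hst : s ≤ t := by
      rw [hs, div_le_iff₀ (by linarith : (0:ℝ) < -(u 0))]; nlinarith
    have hu0' : u 0 ≠ 0 := ne_of_lt hu0
    have hne : -u 0 ≠ 0 := neg_ne_zero.2 hu0'
    have hdmc : a 0 / -u 0 * -u 0 = a 0 := div_mul_cancel₀ _ hne
    have hcoord : a 0 + s * u 0 = 0 := by rw [hs]; linarith [hdmc]
    have h1 : lor (a + s • u) (a + s • u) < 0 := by
      rw [hg]; exact hneg s hs0.le (lt_of_le_of_lt hst htt)
    rw [lor_self_coords] at h1
    have : (a + s • u) 0 = a 0 + s * u 0 := by simp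
    rw [this, hcoord] at h1
    have h2 : (a + s • u) 1 = a 1 + s * u 1 := by simp
    have h3 : (a + s • u) 2 = a 2 + s * u 2 := by simp
    have h4 : (a + s • u) 3 = a 3 + s * u 3 := by simp
    rw [h2, h3, h4] at h1
    nlinarith [sq_nonneg (a 1 + s * u 1), sq_nonneg (a 2 + s * u 2), sq_nonneg (a 3 + s * u 3)]
  -- the limiting 0-coordinate is positive
  set N := a 0 + tstar * u 0 with hN
  clear_value N
  have hNpos : 0 < N := by
    by_contra hle
    push_neg at hle
    have hu0 : u 0 < 0 := by nlinarith
    set s := a 0 / (-(u 0)) with hs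
    have hs0 : 0 < s := div_pos ha0 (by linarith)
    have hst : s ≤ tstar := by
      rw [hs, div_le_iff₀ (by linarith : (0:ℝ) < -(u 0))]; nlinarith
    have hu0' : u 0 ≠ 0 := ne_of_lt hu0
    have hne : -u 0 ≠ 0 := neg_ne_zero.2 hu0'
    have hdmc : a 0 / -u 0 * -u 0 = a 0 := div_mul_cancel₀ _ hne
    have hcoord : a 0 + s * u 0 = 0 := by rw [hs]; linarith [hdmc]
    rcases lt_or_eq_of_le hst with h | h
    · exact absurd hcoord (by have := pos0 s hs0.le h; linarith)
    · -- s = tstar, so a + tstar • u = 0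
      have hNz : N = 0 := by rw [hN, ← h]; linarith
      have h1 : lor (a + tstar • u) (a + tstar • u) = 0 := by
        rw [hg]; linarith [hroot]
      rw [lor_self_coords] at h1
      have e0 : (a + tstar • u) 0 = N := by simp [hN]
      have e1 : (a + tstar • u) 1 = a 1 + tstar * u 1 := by simp
      have e2 : (a + tstar • u) 2 = a 2 + tstar * u 2 := by simp
      have e3 : (a + tstar • u) 3 = a 3 + tstar * u 3 := by simp
      rw [e0, e1, e2, e3, hNz] at h1
      -- all coordinates vanish
      have z1 : a 1 + tstar * u 1 = 0 := by
        nlinarith [sq_nonneg (a 1 + tstar * u 1), sq_nonneg (a 2 + tstar * u 2), sq_nonneg (a 3 + tstar * u 3)]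
      have z2 : a 2 + tstar * u 2 = 0 := by
        nlinarith [sq_nonneg (a 1 + tstar * u 1), sq_nonneg (a 2 + tstar * u 2), sq_nonneg (a 3 + tstar * u 3)]
      have z3 : a 3 + tstar * u 3 = 0 := by
        nlinarith [sq_nonneg (a 1 + tstar * u 1), sq_nonneg (a 2 + tstar * u 2), sq_nonneg (a 3 + tstar * u 3)]
      have hz : a + tstar • u = 0 := by
        funext i; fin_cases i
        · simpa [hN] using (by rw [hNz] at hN; linarith [hN] : a 0 + tstar * u 0 = 0)
        · exact z1
        · exact z2
        · exact z3
      have : ∀ i, lor (a + tstar • u) (v i) = 0 := by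
        intro i; rw [hz]; simp [lor]
      have h5 := this 0
      rw [lor_add_smul] at h5
      have := hav 0; have := huv 0
      nlinarith
  -- the constant C
  set C := |q| * (2 * tstar) + 2 * |b| + 1 with hC
  clear_value C
  have hCpos : 0 < C := by rw [hC]; positivity
  have hgbound : ∀ t, 0 ≤ t → t ≤ tstar → -(q * t ^ 2 + 2 * b * t - 1) ≤ C * (tstar - t) := by
    intro t ht0 htt
    have h1 : q * (tstar + t) + 2 * b ≤ C := by
      have h2 := le_abs_self q
      have h3 := neg_abs_le q
      have h4 := le_abs_self b
      nlinarith [abs_nonneg q, abs_nonneg b]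
    have h5 : -(q * t ^ 2 + 2 * b * t - 1) = (tstar - t) * (q * (tstar + t) + 2 * b) := by
      nlinarith [hroot]
    rw [h5]
    have h6 : 0 ≤ tstar - t := by linarith
    nlinarith [mul_le_mul_of_nonneg_left h1 h6]
  -- choose epsilon
  set ε := min (min tstar (N / (2 * (|u 0| + 1)))) (N ^ 2 / (8 * (R + 1) ^ 2 * C)) with hε
  have hεpos : 0 < ε := by
    apply lt_min (lt_min htpos _) _
    · positivity
    · positivity
  have hεt : ε ≤ tstar := le_trans (min_le_left _ _) (min_le_left _ _)
  have hεu : ε * (|u 0| + 1) ≤ N / 2 := by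
    have h1 : ε ≤ N / (2 * (|u 0| + 1)) := le_trans (min_le_left _ _) (min_le_right _ _)
    have h2 : ε * (2 * (|u 0| + 1)) ≤ N := (le_div_iff₀ (by positivity)).1 h1
    linarith
  have hεC : (R + 1) ^ 2 * C * ε ≤ N ^ 2 / 8 := by
    have h1 : ε ≤ N ^ 2 / (8 * (R + 1) ^ 2 * C) := min_le_right _ _
    have h2 : ε * (8 * (R + 1) ^ 2 * C) ≤ N ^ 2 := (le_div_iff₀ (by positivity)).1 h1
    have h3 : (R + 1) ^ 2 * C * ε = ε * (8 * (R + 1) ^ 2 * C) / 8 := by ring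
    rw [h3]; linarith
  clear_value ε
  clear hε
  set t := tstar - ε with ht
  clear_value t
  have ht0 : 0 ≤ t := by rw [ht]; linarith
  have htt : t < tstar := by rw [ht]; linarith
  have hgt : q * t ^ 2 + 2 * b * t - 1 < 0 := hneg t ht0 htt
  set G := -(q * t ^ 2 + 2 * b * t - 1) with hG
  clear_value G
  have hGpos : 0 < G := by rw [hG]; linarith
  set c := 1 / Real.sqrt G with hc
  clear_value c
  have hsq : Real.sqrt G > 0 := Real.sqrt_pos.2 hGpos
  have hcpos : 0 < c := by rw [hc]; positivity
  set p := c • (a + t • u) with hp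
  clear_value p
  have hps : Real.sqrt G ^ 2 = G := Real.sq_sqrt hGpos.le
  have hpp : lor p p = -1 := by
    rw [hp, lor_smul_left, lor_smul_right, hg]
    rw [hc]
    field_simp
    nlinarith [hps, hsq]
  have hnum : 0 < a 0 + t * u 0 := pos0 t ht0 htt
  have hp0 : p 0 = c * (a 0 + t * u 0) := by simp [hp]; ring
  have hp0pos : 0 < p 0 := by rw [hp0]; positivity
  have hpP : p ∈ polyhedron v := by
    refine ⟨⟨hpp, hp0pos⟩, fun i => ?_⟩
    rw [hp, lor_smul_left, lor_add_smul]
    have := hav i; have := huv i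
    have : 0 ≤ lor a (v i) + t * lor u (v i) := by nlinarith [hav i, huv i]
    positivity
  -- contradiction with the bound
  have hple := hR p hpP
  have h6 : |p 0| ≤ ‖p‖ := by simpa [Real.norm_eq_abs] using norm_le_pi_norm p 0
  have habs : p 0 ≤ R := le_trans (le_trans (le_abs_self _) h6) hple
  have hchain : a 0 + t * u 0 ≤ R * Real.sqrt G := by
    rw [hp0, hc, one_div, inv_mul_eq_div, div_le_iff₀ hsq] at habs
    exact habs
  have hsqle : (a 0 + t * u 0) * (a 0 + t * u 0) ≤ R ^ 2 * G := by
    have h9 := mul_self_le_mul_self hnum.le hchain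
    have h10 : (R * Real.sqrt G) * (R * Real.sqrt G) = R ^ 2 * G := by
      have hms : Real.sqrt G * Real.sqrt G = G := Real.mul_self_sqrt hGpos.le
      linear_combination (R ^ 2) * hms
    linarith [h10.le, h10.symm.le]
  have htsub : tstar - t = ε := by rw [ht]; ring
  have hGle : G ≤ C * ε := by
    have h11 := hgbound t ht0 htt.le
    rw [htsub] at h11
    rw [hG]; linarith
  have h7 : ε * u 0 ≤ N / 2 := by
    have h7a : ε * u 0 ≤ ε * (|u 0| + 1) := by nlinarith [le_abs_self (u 0), hεpos]
    linarith
  have h12 : t * u 0 = tstar * u 0 - ε * u 0 := by rw [ht]; ring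
  have hnum2 : N / 2 ≤ a 0 + t * u 0 := by
    linarith [h12, h7]
  have h13 : (N / 2) * (N / 2) ≤ (a 0 + t * u 0) * (a 0 + t * u 0) :=
    mul_self_le_mul_self (by positivity) hnum2
  have h14 : R ^ 2 * G ≤ R ^ 2 * (C * ε) := mul_le_mul_of_nonneg_left hGle (sq_nonneg R)
  have h15 : R ^ 2 * (C * ε) ≤ (R + 1) ^ 2 * (C * ε) := by
    have h15a : R ^ 2 ≤ (R + 1) ^ 2 := by
      have : R ≤ R + 1 := by linarith
      exact pow_le_pow_left₀ hR0 this 2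
    exact mul_le_mul_of_nonneg_right h15a (by positivity)
  have h16 : (R + 1) ^ 2 * (C * ε) ≤ N ^ 2 / 8 := by
    have he : (R + 1) ^ 2 * (C * ε) = (R + 1) ^ 2 * C * ε := by ring
    rw [he]; exact hεC
  have hNN : 0 < N * N := mul_pos hNpos hNpos
  clear hg hneg hR hav huv hgbound pos0 hroot hεu hεC hchain habs h6 hple hpP hp0pos hp0 hnum hpp hps hp hc hsq hcpos hgt hG hGpos h7 h12 hεpos hεt htpos ha ha0 haP hR0 hCpos hC hN hNpos htsub hGle ht ht0 htt
  linarith [h13, h14, h15, h16, hsqle, hNN]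

lemma strict_point (v : Fin 4 → (Fin 4 → ℝ)) (hunit : ∀ i, lor (v i) (v i) = 1)
    (hint : (interior ((Subtype.val : Hyp → (Fin 4 → ℝ)) ⁻¹' polyhedron v)).Nonempty) :
    ∃ W, lor W W = -1 ∧ 0 < W 0 ∧ ∀ i, 0 < lor W (v i) := by
  obtain ⟨x₀, hx₀⟩ := hint
  set W := (x₀ : Fin 4 → ℝ) with hWdef
  have hWP' : x₀ ∈ ((Subtype.val : Hyp → (Fin 4 → ℝ)) ⁻¹' polyhedron v) := interior_subset hx₀
  have hWP : W ∈ polyhedron v := hWP'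
  have hWH : W ∈ Hyp := x₀.2
  refine ⟨W, hWH.1, hWH.2, fun i => ?_⟩
  rcases lt_or_eq_of_le (hWP.2 i) with h | h
  · exact h
  -- lor W (v i) = 0; construct points leaving the polyhedron arbitrarily close to W
  exfalso
  have h0 : lor W (v i) = 0 := h.symm
  obtain ⟨ε, hεpos, hball⟩ := Metric.mem_nhds_iff.1 (mem_interior_iff_mem_nhds.1 hx₀)
  set f : ℝ → (Fin 4 → ℝ) := fun t => Real.cosh t • W - Real.sinh t • (v i) with hf
  have hfc : Continuous f := by
    apply Continuous.sub
    · exact (Real.continuous_cosh).smul continuous_const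
    · exact (Real.continuous_sinh).smul continuous_const
  have hf0 : f 0 = W := by simp [hf]
  have htend : Filter.Tendsto f (nhds 0) (nhds W) := by
    have := hfc.tendsto 0
    rwa [hf0] at this
  have hfHyp : ∀ t, lor (f t) (f t) = -1 := by
    intro t
    have expand : lor (f t) (f t) = (Real.cosh t)^2 * lor W W
        - 2 * Real.cosh t * Real.sinh t * lor W (v i) + (Real.sinh t)^2 * lor (v i) (v i) := by
      simp [hf, lor]; ring
    rw [expand, hWH.1, h0, hunit i]
    nlinarith [Real.cosh_sq_sub_sinh_sq t]
  have hfv : ∀ t, lor (f t) (v i) = -Real.sinh t := by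
    intro t
    have expand : lor (f t) (v i) = Real.cosh t * lor W (v i) - Real.sinh t * lor (v i) (v i) := by
      simp [hf, lor]; ring
    rw [expand, h0, hunit i]; ring
  have ev1 : ∀ᶠ t in nhds (0 : ℝ), dist (f t) W < ε := by
    have := htend.eventually_mem (Metric.ball_mem_nhds W hεpos)
    filter_upwards [this] with t ht
    exact Metric.mem_ball.1 ht
  have ev2 : ∀ᶠ t in nhds (0 : ℝ), 0 < (f t) 0 := by
    have htend0 : Filter.Tendsto (fun t => f t 0) (nhds 0) (nhds (W 0)) :=
      ((continuous_apply 0).tendsto W).comp htend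
    exact htend0.eventually (eventually_gt_nhds hWH.2)
  obtain ⟨t, ⟨hdist, hft0⟩, htpos⟩ :=
    (((ev1.and ev2).filter_mono nhdsWithin_le_nhds).and self_mem_nhdsWithin).exists
      (f := nhdsWithin (0:ℝ) (Set.Ioi 0))
  have hy : f t ∈ Hyp := ⟨hfHyp t, hft0⟩
  have hmem : (⟨f t, hy⟩ : Hyp) ∈ Metric.ball x₀ ε := by
    rw [Metric.mem_ball, Subtype.dist_eq]
    exact hdist
  have := hball hmem
  have hle : 0 ≤ lor (f t) (v i) := this.2 i
  rw [hfv t] at hle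
  have : 0 < Real.sinh t := Real.sinh_pos_iff.2 htpos
  linarith

lemma escape_pos (v : Fin 4 → (Fin 4 → ℝ)) (R : ℝ) (hR : ∀ p ∈ polyhedron v, ‖p‖ ≤ R)
    (a : Fin 4 → ℝ) (ha : lor a a = -1) (ha0 : 0 < a 0) (hav : ∀ i, 0 < lor a (v i))
    (w : Fin 4 → ℝ) (hq : 0 < lor w w) (hwv : ∀ i, 0 ≤ lor w (v i))
    (hbw : 0 ≤ lor a w) : False := by
  set q := lor w w with hqd
  clear_value q
  set b := lor a w with hbd
  clear_value b
  set s := Real.sqrt (b ^ 2 + q) with hsd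
  have hs2 : s ^ 2 = b ^ 2 + q := Real.sq_sqrt (by positivity)
  have hs0 : 0 ≤ s := Real.sqrt_nonneg _
  clear_value s
  have hbs : b < s := by nlinarith
  set tstar := (s - b) / q with htd
  clear_value tstar
  have htpos : 0 < tstar := by rw [htd]; exact div_pos (by linarith) hq
  have hqne : q ≠ 0 := ne_of_gt hq
  have hroot : q * tstar ^ 2 + 2 * b * tstar - 1 = 0 := by
    rw [htd]; field_simp; nlinarith [hs2]
  have hneg : ∀ t, 0 ≤ t → t < tstar → q * t ^ 2 + 2 * b * t - 1 < 0 := by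
    intro t ht0 htt
    have h1 : 0 < q * (tstar + t) + 2 * b := by nlinarith
    nlinarith [mul_pos (sub_pos.2 htt) h1]
  exact ray_lemma v R hR a w ha ha0 hav hwv tstar htpos
    (by rw [← hqd, ← hbd]; exact hroot)
    (fun t ht0 htt => by rw [← hqd, ← hbd]; exact hneg t ht0 htt)

lemma escape (v : Fin 4 → (Fin 4 → ℝ)) (hcompact : IsCompact (polyhedron v))
    (a : Fin 4 → ℝ) (ha : lor a a = -1) (ha0 : 0 < a 0) (hav : ∀ i, 0 < lor a (v i))
    (u : Fin 4 → ℝ) (hu : u ≠ 0) (huv : ∀ i, 0 ≤ lor u (v i)) (hb : 0 ≤ lor a u) :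
    False := by
  obtain ⟨R, hRsub⟩ := hcompact.isBounded.subset_closedBall 0
  have hR : ∀ p ∈ polyhedron v, ‖p‖ ≤ R := fun p hp => by
    simpa [Metric.mem_closedBall, dist_zero_right] using hRsub hp
  rcases lt_trichotomy (lor u u) 0 with hq | hq | hq
  · -- timelike u: project a off u
    set β := -(lor a u) / (lor u u) with hβ
    have hβ0 : 0 ≤ β := by
      rw [hβ, div_nonneg_iff]; right; exact ⟨by linarith, hq.le⟩
    set e := a + β • u with he
    have hqne : lor u u ≠ 0 := ne_of_lt hq
    have hmul : β * lor u u = -(lor a u) := by rw [hβ]; field_simp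
    have hae : lor e u = 0 := by
      rw [he, lor_add_smul]; linarith [hmul]
    have hue : lor u e = 0 := by rw [lor_comm]; exact hae
    have hene : e ≠ 0 := by
      intro h0
      have h1 : lor e (v 0) = lor a (v 0) + β * lor u (v 0) := by rw [he, lor_add_smul]
      rw [h0] at h1
      have h2 : lor 0 (v 0) = 0 := by simp [lor]
      nlinarith [hav 0, huv 0, hβ0, mul_nonneg hβ0 (huv 0)]
    have hee : 0 < lor e e := by
      by_contra hle
      push_neg at hle
      exact hene (perp_timelike_eq_zero hq hue hle)
    have hev : ∀ i, 0 ≤ lor e (v i) := by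
      intro i; rw [he, lor_add_smul]
      exact add_nonneg (hav i).le (mul_nonneg hβ0 (huv i))
    have hbe : 0 ≤ lor a e := by
      have h1 : lor e e = lor a e + β * lor u e := by rw [he, lor_add_smul]
      rw [hue, mul_zero, add_zero] at h1
      linarith
    exact escape_pos v R hR a ha ha0 hav e hee hev hbe
  · -- null u
    rcases eq_or_lt_of_le hb with hb0 | hbpos
    · -- lor a u = 0 too: u must be 0
      refine hu (perp_timelike_eq_zero (u := a) (e := u) ?_ hb0.symm hq.le)
      rw [ha]; norm_num
    · -- b > 0, root at 1/(2b)
      set b := lor a u with hbd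
      have hbne : b ≠ 0 := ne_of_gt hbpos
      refine ray_lemma v R hR a u ha ha0 hav huv (1 / (2 * b)) (by positivity) ?_ ?_
      · rw [hq]; field_simp; rw [← hbd]; ring
      · intro t ht0 htt
        rw [hq]
        have h2 : t * (2 * b) < 1 := by
          have h3 := mul_lt_mul_of_pos_right htt (by positivity : (0:ℝ) < 2 * b)
          have h4 : 1 / (2 * b) * (2 * b) = 1 := by field_simp
          linarith
        nlinarith
  · exact escape_pos v R hR a ha ha0 hav u hq huv hb

lemma exists_perp (v : Fin 4 → (Fin 4 → ℝ)) (hdep : ¬ LinearIndependent ℝ v) :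
    ∃ u : Fin 4 → ℝ, u ≠ 0 ∧ ∀ i, lor u (v i) = 0 := by
  obtain ⟨g, hsum, i0, hgi⟩ := Fintype.not_linearIndependent_iff.1 hdep
  set A : Matrix (Fin 4) (Fin 4) ℝ :=
    Matrix.of (fun i j => if j = 0 then -(v i j) else v i j) with hA
  have hdet : A.det = 0 := by
    rw [← Matrix.exists_vecMul_eq_zero_iff]
    refine ⟨g, fun h => hgi (congrFun h i0), ?_⟩
    funext j
    have hj : ∑ k, g k * v k j = 0 := by
      have h1 := congrFun hsum j
      simpa [Finset.sum_apply] using h1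
    by_cases h0 : j = 0
    · subst h0
      simp [Matrix.vecMul, dotProduct, hA, Finset.mul_sum, Fin.sum_univ_four] at hj ⊢
      linarith
    · simp [Matrix.vecMul, dotProduct, hA, h0, Fin.sum_univ_four] at hj ⊢
      linarith
  obtain ⟨u, hu0, hAu⟩ := Matrix.exists_mulVec_eq_zero_iff.2 hdet
  refine ⟨u, hu0, fun i => ?_⟩
  have h1 := congrFun hAu i
  simp [Matrix.mulVec, dotProduct, hA, Fin.sum_univ_four] at h1
  simp [lor]
  linarith

lemma lor_one_le_sq {x : Fin 4 → ℝ} (hx : lor x x = -1) : 1 ≤ (x 0) ^ 2 := by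
  simp only [lor] at hx
  nlinarith [sq_nonneg (x 1), sq_nonneg (x 2), sq_nonneg (x 3)]

lemma horient {x y : Fin 4 → ℝ} (hx : lor x x = -1) (hy : lor y y = -1)
    (hy0 : 0 < y 0) (hxy : lor x y < 0) : 0 < x 0 := by
  rcases lt_trichotomy (x 0) 0 with h | h | h
  · exfalso
    have h1 : lor (-x) y ≤ -1 := by
      refine lor_le_neg_one ?_ hy ?_ hy0
      · rw [lor_neg_neg]; exact hx
      · show 0 < -x 0; simpa using h
    rw [lor_neg_left] at h1
    linarith
  · exfalso
    have := lor_one_le_sq hx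
    rw [h] at this; norm_num at this
  · exact h

/-- Uniqueness: two compact hyperbolic tetrahedra with the same Gram matrix
(equivalently, the same dihedral angles) differ by a hyperbolic isometry. -/
theorem tetrahedron_unique_up_to_isometry (v v' : Fin 4 → (Fin 4 → ℝ))
    (hunit : ∀ i, lor (v i) (v i) = 1) (hunit' : ∀ i, lor (v' i) (v' i) = 1)
    (hcompact : IsCompact (polyhedron v)) (hcompact' : IsCompact (polyhedron v'))
    (hint : (interior ((Subtype.val : Hyp → (Fin 4 → ℝ)) ⁻¹' polyhedron v)).Nonempty)
    (hint' : (interior ((Subtype.val : Hyp → (Fin 4 → ℝ)) ⁻¹' polyhedron v')).Nonempty)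
    (hgram : ∀ i j, lor (v i) (v j) = lor (v' i) (v' j)) :
    ∃ ρ : (Fin 4 → ℝ) ≃ₗ[ℝ] (Fin 4 → ℝ),
      (∀ x y : Fin 4 → ℝ, lor (ρ x) (ρ y) = lor x y) ∧
      (ρ '' Hyp = Hyp) ∧
      (∀ i, ρ (v i) = v' i) ∧
      ρ '' polyhedron v = polyhedron v' := by
  obtain ⟨W, hWW, hW0, hWv⟩ := strict_point v hunit hint
  obtain ⟨W', hWW', hW0', hWv'⟩ := strict_point v' hunit' hint'
  have hindepOf : ∀ (w : Fin 4 → (Fin 4 → ℝ)), IsCompact (polyhedron w) →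
      ∀ (W : Fin 4 → ℝ), lor W W = -1 → 0 < W 0 → (∀ i, 0 < lor W (w i)) →
      LinearIndependent ℝ w := by
    intro w hcpt Z hZZ hZ0 hZv
    by_contra hdep
    obtain ⟨u, hu0, huv⟩ := exists_perp w hdep
    rcases le_or_gt 0 (lor Z u) with hb | hb
    · exact escape w hcpt Z hZZ hZ0 hZv u hu0 (fun i => le_of_eq (huv i).symm) hb
    · refine escape w hcpt Z hZZ hZ0 hZv (-u) (neg_ne_zero.2 hu0) (fun i => ?_) ?_
      · rw [lor_neg_left, huv i]; norm_num
      · rw [lor_comm, lor_neg_left, lor_comm]; linarith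
  have hindep : LinearIndependent ℝ v := hindepOf v hcompact W hWW hW0 hWv
  have hindep' : LinearIndependent ℝ v' := hindepOf v' hcompact' W' hWW' hW0' hWv'
  have hcard : Fintype.card (Fin 4) = Module.finrank ℝ (Fin 4 → ℝ) := by simp
  set bv := basisOfLinearIndependentOfCardEqFinrank hindep hcard with hbvdef
  set bv' := basisOfLinearIndependentOfCardEqFinrank hindep' hcard with hbvdef'
  have hbv : ⇑bv = v := coe_basisOfLinearIndependentOfCardEqFinrank _ _
  have hbv' : ⇑bv' = v' := coe_basisOfLinearIndependentOfCardEqFinrank _ _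
  set ρ : (Fin 4 → ℝ) ≃ₗ[ℝ] (Fin 4 → ℝ) := bv.equiv bv' (Equiv.refl _) with hρdef
  have hρv : ∀ i, ρ (v i) = v' i := by
    intro i
    have h1 := bv.equiv_apply i bv' (Equiv.refl _)
    simp only [Equiv.refl_apply] at h1
    rw [congrFun hbv i, congrFun hbv' i] at h1
    rw [hρdef]; exact h1
  set lorB : (Fin 4 → ℝ) →ₗ[ℝ] (Fin 4 → ℝ) →ₗ[ℝ] ℝ :=
    LinearMap.mk₂ ℝ lor (by intros; simp [lor]; ring) (by intros; simp [lor]; ring)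
      (by intros; simp [lor]; ring) (by intros; simp [lor]; ring) with hlorB
  have hpres : ∀ x y : Fin 4 → ℝ, lor (ρ x) (ρ y) = lor x y := by
    have hBB : (lorB.compl₁₂ (ρ : (Fin 4 → ℝ) →ₗ[ℝ] (Fin 4 → ℝ))
        (ρ : (Fin 4 → ℝ) →ₗ[ℝ] (Fin 4 → ℝ))) = lorB := by
      apply LinearMap.ext_basis bv bv
      intro i j
      rw [hbv]
      simp only [LinearMap.compl₁₂_apply, LinearEquiv.coe_coe, hlorB, LinearMap.mk₂_apply]
      rw [hρv i, hρv j]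
      exact (hgram i j).symm
    intro x y
    have h1 := LinearMap.congr_fun (LinearMap.congr_fun hBB x) y
    simpa only [LinearMap.compl₁₂_apply, LinearEquiv.coe_coe, hlorB,
      LinearMap.mk₂_apply] using h1
  have hsymm_pres : ∀ x y : Fin 4 → ℝ, lor (ρ.symm x) (ρ.symm y) = lor x y := by
    intro x y
    rw [← hpres (ρ.symm x) (ρ.symm y), ρ.apply_symm_apply, ρ.apply_symm_apply]
  -- no point of Hyp is on the negative side of all the walls of v'
  have noNeg : ∀ y : Fin 4 → ℝ, lor y y = -1 → 0 < y 0 →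
      (∀ i, lor y (v' i) < 0) → False := by
    intro y hy hy0 hyv
    have hc : lor W' y ≤ -1 := lor_le_neg_one hWW' hy hW0' hy0
    refine escape v' hcompact' W' hWW' hW0' hWv' (W' - y) ?_ (fun i => ?_) ?_
    · intro h0
      have he : W' = y := sub_eq_zero.1 h0
      have h1 := hyv 0
      rw [← he] at h1
      linarith [hWv' 0]
    · rw [lor_sub_left]
      linarith [hWv' i, hyv i]
    · rw [lor_comm, lor_sub_left]
      have h2 : lor y W' = lor W' y := lor_comm y W'
      linarith [hc, hWW', h2]
  set z := ρ W with hzdef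
  have hzz : lor z z = -1 := by rw [hzdef, hpres]; exact hWW
  have hzv : ∀ i, 0 < lor z (v' i) := by
    intro i; rw [hzdef, ← hρv i, hpres]; exact hWv i
  have hz0 : 0 < z 0 := by
    rcases lt_trichotomy (z 0) 0 with h | h | h
    · exfalso
      refine noNeg (-z) (by rw [lor_neg_neg]; exact hzz) ?_ (fun i => ?_)
      · show 0 < -z 0; simpa using h
      · rw [lor_neg_left]; linarith [hzv i]
    · exfalso
      have := lor_one_le_sq hzz
      rw [h] at this; norm_num at this
    · exact h
  have hfwd : ∀ x ∈ Hyp, ρ x ∈ Hyp := by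
    intro x hx
    obtain ⟨hxx, hx0⟩ := hx
    have hxx' : lor (ρ x) (ρ x) = -1 := by rw [hpres]; exact hxx
    refine ⟨hxx', ?_⟩
    have h1 : lor x W ≤ -1 := lor_le_neg_one hxx hWW hx0 hW0
    have h2 : lor (ρ x) z < 0 := by rw [hzdef, hpres]; linarith
    exact horient hxx' hzz hz0 h2
  have hbwd : ∀ y ∈ Hyp, ρ.symm y ∈ Hyp := by
    intro y hy
    obtain ⟨hyy, hy0⟩ := hy
    have hyy' : lor (ρ.symm y) (ρ.symm y) = -1 := by rw [hsymm_pres]; exact hyy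
    refine ⟨hyy', ?_⟩
    have hWz : ρ.symm z = W := by rw [hzdef, ρ.symm_apply_apply]
    have h1 : lor y z ≤ -1 := lor_le_neg_one hyy hzz hy0 hz0
    have h2 : lor (ρ.symm y) W < 0 := by
      rw [← hWz, hsymm_pres]; linarith
    exact horient hyy' hWW hW0 h2
  refine ⟨ρ, hpres, ?_, hρv, ?_⟩
  · apply Set.Subset.antisymm
    · rintro _ ⟨x, hx, rfl⟩; exact hfwd x hx
    · intro y hy; exact ⟨ρ.symm y, hbwd y hy, ρ.apply_symm_apply y⟩
  · apply Set.Subset.antisymm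
    · rintro _ ⟨x, ⟨hxH, hxv⟩, rfl⟩
      exact ⟨hfwd x hxH, fun i => by rw [← hρv i, hpres]; exact hxv i⟩
    · rintro y ⟨hyH, hyv⟩
      refine ⟨ρ.symm y, ⟨hbwd y hyH, fun i => ?_⟩, ρ.apply_symm_apply y⟩
      have hvi : ρ.symm (v' i) = v i := by rw [← hρv i, ρ.symm_apply_apply]
      rw [← hvi, hsymm_pres]
      exact hyv i
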